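/- Let Π* ∈ ℝ_{≥0}^{k×m} have rank k, let K = cone(Π*) ⊂ ℝ^k (the conic hull of its columns), and assume C_k ⊆ K and K* ∩ bd(C_k*) = {λe_j : j ∈ [k], λ ≥ 0}, where C_k = {x : 𝟙ᵀx ≥ √(k−1)‖x‖₂}, C_k* = {x : 𝟙ᵀx ≥ ‖x‖₂}, and K* is the dual cone of K. If A ∈ GL(k,ℝ) satisfies AΠ* ≥ 0 entrywise and Aᵀ𝟙 = 𝟙, then |det(A)| ≤ 1, with equality if and only if A is a permutation matrix. -/

import Mathlib

open Finset

/-- The conic hull of the columns of a nonnegative matrix. -/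
def matCone {k m : ℕ} (M : Matrix (Fin k) (Fin m) ℝ) : Set (Fin k → ℝ) :=
  {x | ∃ θ : Fin m → ℝ, (∀ j, 0 ≤ θ j) ∧ x = M.mulVec θ}

/-- The dual cone of a set of vectors. -/
def dualCone {k : ℕ} (C : Set (Fin k → ℝ)) : Set (Fin k → ℝ) :=
  {y | ∀ x ∈ C, 0 ≤ ∑ i, y i * x i}

/-- The second-order cone `C_k`. -/
def secondOrderCone (k : ℕ) : Set (Fin k → ℝ) :=
  {x | Real.sqrt (k - 1) * Real.sqrt (∑ i, (x i) ^ 2) ≤ ∑ i, x i}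

/-- The cone `C_k^*`. -/
def secondOrderConeDual (k : ℕ) : Set (Fin k → ℝ) :=
  {x | Real.sqrt (∑ i, (x i) ^ 2) ≤ ∑ i, x i}

def IsPermutationMatrix {k : ℕ} (A : Matrix (Fin k) (Fin k) ℝ) : Prop :=
  ∃ σ : Equiv.Perm (Fin k), ∀ i j, A i j = if σ i = j then 1 else 0

/-- Hadamard's inequality for rows. -/
lemma hadamard_rows {k : ℕ} (A : Matrix (Fin k) (Fin k) ℝ) :
    |A.det| ≤ ∏ i, Real.sqrt (∑ j, A i j ^ 2) := by
  haveI : Fact (Module.finrank ℝ (EuclideanSpace ℝ (Fin k)) = k) :=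
    ⟨finrank_euclideanSpace_fin⟩
  set b : OrthonormalBasis (Fin k) ℝ (EuclideanSpace ℝ (Fin k)) :=
    EuclideanSpace.basisFun (Fin k) ℝ
  set o := b.toBasis.orientation
  set v : Fin k → EuclideanSpace ℝ (Fin k) := fun i => (WithLp.equiv 2 _).symm (A i)
  have h1 : |o.volumeForm v| = |b.toBasis.det v| := o.volumeForm_robust' b v
  have h2 : |o.volumeForm v| ≤ ∏ i, ‖v i‖ := o.abs_volumeForm_apply_le v
  have h3 : b.toBasis.det v = A.det := by
    rw [Module.Basis.det_apply]
    rw [show b.toBasis.toMatrix v = A.transpose by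
      ext i j
      rw [Module.Basis.toMatrix_apply, Matrix.transpose_apply, OrthonormalBasis.coe_toBasis_repr_apply]
      rfl]
    exact A.det_transpose
  have h4 : ∀ i, ‖v i‖ = Real.sqrt (∑ j, A i j ^ 2) := by
    intro i
    rw [EuclideanSpace.norm_eq]
    congr 1
    refine Finset.sum_congr rfl fun j _ => ?_
    rw [Real.norm_eq_abs, sq_abs]
    rfl
  calc |A.det| = |o.volumeForm v| := by rw [h1, h3]
    _ ≤ ∏ i, ‖v i‖ := h2
    _ = _ := by simp [h4]

/-- Membership in the dual of the second-order cone implies the explicit inequality. -/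
lemma dual_soc {k : ℕ} (hk : 2 ≤ k) (y : Fin k → ℝ)
    (hy : y ∈ dualCone (secondOrderCone k)) :
    Real.sqrt (∑ i, y i ^ 2) ≤ ∑ i, y i := by
  have hk0 : (0:ℝ) < k := by positivity
  have hk1 : (1:ℝ) ≤ (k:ℝ) - 1 := by
    have : (2:ℝ) ≤ k := by exact_mod_cast hk
    linarith
  set t := ∑ i, y i with ht
  have hone : (fun _ : Fin k => (1:ℝ)) ∈ secondOrderCone k := by
    show Real.sqrt ((k:ℝ) - 1) * Real.sqrt (∑ _i : Fin k, (1:ℝ)^2) ≤ ∑ _i : Fin k, (1:ℝ)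
    simp only [one_pow, Finset.sum_const, card_univ, Fintype.card_fin, nsmul_eq_mul, mul_one]
    rw [← Real.sqrt_mul (by linarith) (k:ℝ)]
    calc Real.sqrt (((k:ℝ) - 1) * k) ≤ Real.sqrt ((k:ℝ) * k) := by
          apply Real.sqrt_le_sqrt; nlinarith
      _ = k := by rw [Real.sqrt_mul_self hk0.le]
  have htnn : 0 ≤ t := by simpa using hy _ hone
  set z : Fin k → ℝ := fun i => y i - t / k with hz
  have hzsum : ∑ i, z i = 0 := by
    simp only [hz, Finset.sum_sub_distrib, Finset.sum_const, card_univ, Fintype.card_fin,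
      nsmul_eq_mul]
    field_simp
    linarith [ht]
  have hysq : ∑ i, y i ^ 2 = (∑ i, z i ^ 2) + t^2 / k := by
    have : ∀ i, y i ^ 2 = z i ^ 2 + 2 * (t/k) * z i + (t/k)^2 := by
      intro i; simp only [hz]; ring
    rw [Finset.sum_congr rfl fun i _ => this i]
    rw [Finset.sum_add_distrib, Finset.sum_add_distrib, ← Finset.mul_sum, hzsum]
    simp only [mul_zero, add_zero, Finset.sum_const, card_univ, Fintype.card_fin, nsmul_eq_mul]
    field_simp
  set r := Real.sqrt (∑ i, z i ^ 2) with hr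
  have hrnn : 0 ≤ r := Real.sqrt_nonneg _
  have hrsq : r ^ 2 = ∑ i, z i ^ 2 := Real.sq_sqrt (by positivity)
  set c := Real.sqrt (((k:ℝ) - 1) * k) with hc
  have hcnn : 0 ≤ c := Real.sqrt_nonneg _
  have hcsq : c ^ 2 = ((k:ℝ) - 1) * k := Real.sq_sqrt (by positivity)
  have hkey : r ≤ c * t / k := by
    rcases eq_or_lt_of_le hrnn with h0 | hrpos
    · rw [← h0]; positivity
    · set x : Fin k → ℝ := fun i => c / k - z i / r with hx
      have hxsum : ∑ i, x i = c := by
        simp only [hx, Finset.sum_sub_distrib, Finset.sum_const, card_univ, Fintype.card_fin,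
          nsmul_eq_mul]
        rw [show ∑ i, z i / r = (∑ i, z i) / r from (Finset.sum_div _ _ _).symm, hzsum]
        field_simp
        ring
      have hxsq : ∑ i, x i ^ 2 = k := by
        have : ∀ i, x i ^ 2 = (c/k)^2 - 2 * (c/k) * (z i / r) + (z i)^2 / r^2 := by
          intro i; simp only [hx]; ring
        rw [Finset.sum_congr rfl fun i _ => this i]
        rw [Finset.sum_add_distrib, Finset.sum_sub_distrib]
        rw [show ∑ i, (z i)^2 / r^2 = (∑ i, (z i)^2) / r^2 from (Finset.sum_div _ _ _).symm]
        rw [← hrsq]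
        rw [show ∑ i, 2 * (c/k) * (z i / r) = 2 * (c/k) * ((∑ i, z i) / r) by
          rw [Finset.sum_div, Finset.mul_sum], hzsum]
        simp only [Finset.sum_const, card_univ, Fintype.card_fin, nsmul_eq_mul]
        have : r ^ 2 ≠ 0 := by positivity
        field_simp
        nlinarith [hcsq]
      have hxmem : x ∈ secondOrderCone k := by
        show Real.sqrt ((k:ℝ) - 1) * Real.sqrt (∑ i, x i ^ 2) ≤ ∑ i, x i
        rw [hxsq, hxsum, hc, ← Real.sqrt_mul (by linarith)]
      have hyx : ∑ i, y i * x i = c * t / k - r := by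
        have : ∀ i, y i * x i = (c/k) * y i - (z i * y i) / r := by
          intro i; simp only [hx]; ring
        rw [Finset.sum_congr rfl fun i _ => this i, Finset.sum_sub_distrib, ← Finset.mul_sum,
          ← ht]
        rw [show ∑ i, z i * y i / r = (∑ i, z i * y i) / r from (Finset.sum_div _ _ _).symm]
        have hzy : ∑ i, z i * y i = ∑ i, z i ^ 2 := by
          have : ∀ i, z i * y i = z i ^ 2 + (t/k) * z i := by
            intro i; simp only [hz]; ring
          rw [Finset.sum_congr rfl fun i _ => this i, Finset.sum_add_distrib, ← Finset.mul_sum,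
            hzsum, mul_zero, add_zero]
        rw [hzy, ← hrsq]
        have : r ≠ 0 := hrpos.ne'
        field_simp
      linarith [hy x hxmem, hyx ▸ hy x hxmem]
  have hfinal : ∑ i, y i ^ 2 ≤ t ^ 2 := by
    rw [hysq, ← hrsq]
    have h1 : r^2 ≤ (c * t / k)^2 := by nlinarith
    have : (c * t / k)^2 = ((k:ℝ)-1) * t^2 / k := by
      rw [div_pow, mul_pow, hcsq]; field_simp
    rw [this] at h1
    have : ((k:ℝ)-1) * t^2 / k + t^2/k = t^2 := by field_simp; ring
    linarith
  calc Real.sqrt (∑ i, y i ^ 2) ≤ Real.sqrt (t^2) := Real.sqrt_le_sqrt hfinal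
    _ = |t| := Real.sqrt_sq_eq_abs t
    _ = t := abs_of_nonneg htnn

/-- Points on the boundary sphere of `C_k^*` with unit level are frontier points. -/
lemma mem_frontier_soc {k : ℕ} (hk : 2 ≤ k) (x : Fin k → ℝ)
    (hsum : ∑ i, x i = 1) (hnorm : Real.sqrt (∑ i, x i ^ 2) = 1) :
    x ∈ frontier (secondOrderConeDual k) := by
  have hxsq : ∑ i, x i ^ 2 = 1 := by
    have := congrArg (· ^ 2) hnorm
    simpa [Real.sq_sqrt (by positivity : (0:ℝ) ≤ ∑ i, x i ^ 2)] using this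
  have hmem : x ∈ secondOrderConeDual k := le_of_eq (hnorm.trans hsum.symm)
  rw [frontier_eq_closure_inter_closure]
  refine ⟨subset_closure hmem, ?_⟩
  set i0 : Fin k := ⟨0, by omega⟩
  set i1 : Fin k := ⟨1, by omega⟩
  have hne : i0 ≠ i1 := by simp [i0, i1, Fin.ext_iff]
  set u : Fin k → ℝ := fun i => (if i = i0 then (1:ℝ) else 0) - (if i = i1 then 1 else 0)
    with hu
  have husum : ∑ i, u i = 0 := by
    simp only [hu, Finset.sum_sub_distrib, Finset.sum_ite_eq', Finset.mem_univ, if_pos,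
      sub_self]
  have husq : ∑ i, u i ^ 2 = 2 := by
    have huval : ∀ i, u i ^ 2 = (if i = i0 then (1:ℝ) else 0) + (if i = i1 then 1 else 0) := by
      intro i
      simp only [hu]
      by_cases h1 : i = i0
      · simp [h1, hne]
      · by_cases h2 : i = i1 <;> simp [h1, h2, hne.symm]
    rw [Finset.sum_congr rfl fun i _ => huval i, Finset.sum_add_distrib]
    simp [Finset.sum_ite_eq']
    norm_num
  set d := ∑ i, x i * u i with hd
  set s : ℝ := if 0 ≤ d then 1 else -1 with hs
  have hsd : 0 ≤ s * d := by
    rcases le_or_gt 0 d with h | h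
    · rw [hs, if_pos h, one_mul]; exact h
    · rw [hs, if_neg (not_le.mpr h)]; nlinarith
  have hsne : s ≠ 0 := by rcases le_or_gt 0 d with h | h <;> simp [hs, h, not_le.mpr]
  rw [mem_closure_iff_seq_limit]
  refine ⟨fun n => fun i => x i + (s / (n+1)) * u i, fun n => ?_, ?_⟩
  · intro hmem'
    have hsn : (0:ℝ) < ((n:ℝ)+1) := by positivity
    have h1 : ∑ i, (x i + (s / (n+1)) * u i) = 1 := by
      rw [Finset.sum_add_distrib, hsum, ← Finset.mul_sum, husum, mul_zero, add_zero]
    have h2 : ∑ i, (x i + (s / (n+1)) * u i) ^ 2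
        = 1 + 2 * (s/(n+1)) * d + (s/(n+1))^2 * 2 := by
      have hterm : ∀ i, (x i + (s / (n+1)) * u i) ^ 2
          = x i ^2 + 2 * (s/(n+1)) * (x i * u i) + (s/(n+1))^2 * u i ^2 := by
        intro i; ring
      rw [Finset.sum_congr rfl fun i _ => hterm i, Finset.sum_add_distrib,
        Finset.sum_add_distrib, hxsq, ← Finset.mul_sum, ← Finset.mul_sum, husq, ← hd]
    have hgt : (1:ℝ) < ∑ i, (x i + (s / (n+1)) * u i) ^ 2 := by
      rw [h2]
      have h3 : 0 ≤ 2 * (s/(n+1)) * d := by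
        rw [show 2 * (s/(n+1)) * d = (2*(s*d))/((n:ℝ)+1) by ring]
        exact div_nonneg (by linarith) hsn.le
      have h4 : (0:ℝ) < (s/(n+1))^2 * 2 := by positivity
      linarith
    have hmem2 : Real.sqrt (∑ i, (x i + (s/(n+1))*u i)^2)
        ≤ ∑ i, (x i + (s/(n+1))*u i) := hmem'
    rw [h1] at hmem2
    have : 1 < Real.sqrt (∑ i, (x i + (s/(n+1))*u i)^2) := by
      rw [show (1:ℝ) = Real.sqrt 1 by simp]
      exact Real.sqrt_lt_sqrt (by norm_num) (by simpa using hgt)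
    linarith
  · have : ∀ i : Fin k, Filter.Tendsto (fun n : ℕ => x i + (s / (n+1)) * u i)
        Filter.atTop (nhds (x i)) := by
      intro i
      have h1 : Filter.Tendsto (fun n : ℕ => (s / (n+1)) * u i) Filter.atTop (nhds 0) := by
        have h2 := tendsto_one_div_add_atTop_nhds_zero_nat.const_mul s
        rw [mul_zero] at h2
        have heq : (fun n : ℕ => (s / (n+1)) * u i) = fun n : ℕ => (s * (1/(n+1))) * u i := by
          funext n; ring
        rw [heq]
        simpa using h2.mul_const (u i)
      simpa using (tendsto_const_nhds (x := x i)).add h1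
    exact tendsto_pi_nhds.mpr this

lemma perm_matrix_abs_det {k : ℕ} (A : Matrix (Fin k) (Fin k) ℝ)
    (h : IsPermutationMatrix A) : |A.det| = 1 := by
  obtain ⟨σ, hσ⟩ := h
  have : A = σ.permMatrix ℝ := by
    ext i j
    rw [hσ i j]
    simp [Equiv.Perm.permMatrix, PEquiv.toMatrix, Equiv.toPEquiv, Option.mem_def, eq_comm]
  rw [this, Matrix.det_permutation]
  rcases Int.units_eq_one_or (Equiv.Perm.sign σ) with h | h <;> simp [h]

theorem det_bound_sufficiently_scattered
    {k m : ℕ} (Pi0 : Matrix (Fin k) (Fin m) ℝ)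
    (hPnn : ∀ a j, 0 ≤ Pi0 a j)
    (hrank : Pi0.rank = k)
    (hC : secondOrderCone k ⊆ matCone Pi0)
    (hbd : dualCone (matCone Pi0) ∩ frontier (secondOrderConeDual k)
      = {x | ∃ j : Fin k, ∃ lam : ℝ, 0 ≤ lam ∧ x = lam • (fun i => if i = j then (1:ℝ) else 0)})
    (A : Matrix (Fin k) (Fin k) ℝ) (hA : IsUnit A.det)
    (hAP : ∀ a j, 0 ≤ (A * Pi0) a j)
    (hcol : ∀ j, ∑ i, A i j = 1) :
    |A.det| ≤ 1 ∧ (|A.det| = 1 ↔ IsPermutationMatrix A) := by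
  -- dispose of the degenerate cases k = 0 and k = 1
  rcases Nat.lt_or_ge k 2 with hk | hk2
  · interval_cases k
    · -- k = 0
      have hdet : A.det = 1 := Matrix.det_isEmpty
      refine ⟨by rw [hdet]; norm_num, ?_, fun _ => by rw [hdet]; norm_num⟩
      intro _
      exact ⟨Equiv.refl _, fun i => i.elim0⟩
    · -- k = 1 : hbd is contradictory
      exfalso
      set e0 : Fin 1 → ℝ := fun i => if i = 0 then 1 else 0 with he0
      have hrhs : e0 ∈ {x : Fin 1 → ℝ | ∃ j : Fin 1, ∃ lam : ℝ,
          0 ≤ lam ∧ x = lam • (fun i => if i = j then (1:ℝ) else 0)} := by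
        exact ⟨0, 1, by norm_num, by funext i; simp [he0]⟩
      rw [← hbd] at hrhs
      have hfr : e0 ∈ frontier (secondOrderConeDual 1) := hrhs.2
      have hint : e0 ∈ interior (secondOrderConeDual 1) := by
        rw [mem_interior_iff_mem_nhds, Metric.mem_nhds_iff]
        refine ⟨1/2, by norm_num, fun y hy => ?_⟩
        have hdist : dist (y 0) (e0 0) < 1/2 :=
          lt_of_le_of_lt (dist_le_pi_dist y e0 0) hy
        have he00 : e0 0 = 1 := by simp [he0]
        rw [he00, Real.dist_eq] at hdist
        have hy0 : (1:ℝ)/2 < y 0 := by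
          rcases abs_lt.mp hdist with ⟨h1, h2⟩; linarith
        show Real.sqrt (∑ i : Fin 1, y i ^ 2) ≤ ∑ i : Fin 1, y i
        rw [Fin.sum_univ_one, Fin.sum_univ_one, Real.sqrt_sq_eq_abs,
          abs_of_nonneg (by linarith)]
      rw [frontier_eq_closure_inter_closure] at hfr
      have hcc := hfr.2
      rw [closure_compl] at hcc
      exact hcc hint
  -- main case k ≥ 2
  have hdual : ∀ i, A i ∈ dualCone (matCone Pi0) := by
    intro i x hx
    obtain ⟨θ, hθ, rfl⟩ := hx
    have : ∑ j, A i j * Pi0.mulVec θ j = ∑ c, (A * Pi0) i c * θ c := by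
      simp only [Matrix.mulVec, Matrix.mul_apply, dotProduct]
      rw [show ∑ x : Fin k, A i x * ∑ j, Pi0 x j * θ j
          = ∑ x : Fin k, ∑ j, A i x * (Pi0 x j * θ j) from
        Finset.sum_congr rfl fun x _ => Finset.mul_sum _ _ _]
      rw [Finset.sum_comm]
      refine Finset.sum_congr rfl fun c _ => ?_
      rw [Finset.sum_mul]
      exact Finset.sum_congr rfl fun j _ => by ring
    rw [this]
    exact Finset.sum_nonneg fun c _ => mul_nonneg (hAP i c) (hθ c)
  have hsocd : ∀ i, Real.sqrt (∑ j, A i j ^ 2) ≤ ∑ j, A i j := by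
    intro i
    exact dual_soc hk2 (A i) (fun x hx => hdual i x (hC hx))
  set t : Fin k → ℝ := fun i => ∑ j, A i j with htdef
  set n : Fin k → ℝ := fun i => Real.sqrt (∑ j, A i j ^ 2) with hndef
  have hnnn : ∀ i, 0 ≤ n i := fun i => Real.sqrt_nonneg _
  have hnt : ∀ i, n i ≤ t i := hsocd
  have htnn : ∀ i, 0 ≤ t i := fun i => (hnnn i).trans (hnt i)
  have htsum : ∑ i, t i = k := by
    simp only [htdef]
    rw [Finset.sum_comm (f := fun i j => A i j)]
    simp [hcol]
  have hprord : ∏ i, t i ≤ ∏ i, Real.exp (t i - 1) :=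
    Finset.prod_le_prod (fun i _ => htnn i)
      (fun i _ => by have := Real.add_one_le_exp (t i - 1); linarith)
  have hexp : ∏ i, Real.exp (t i - 1) = 1 := by
    rw [← Real.exp_sum]
    simp only [Finset.sum_sub_distrib, htsum, Finset.sum_const, card_univ, Fintype.card_fin,
      nsmul_eq_mul, mul_one, sub_self, Real.exp_zero]
  have hprodt : ∏ i, t i ≤ 1 := hexp ▸ hprord
  have hprodn : ∏ i, n i ≤ ∏ i, t i :=
    Finset.prod_le_prod (fun i _ => hnnn i) (fun i _ => hnt i)
  have hhad : |A.det| ≤ ∏ i, n i := hadamard_rows A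
  have hle : |A.det| ≤ 1 := hhad.trans (hprodn.trans hprodt)
  refine ⟨hle, ?_, fun h => perm_matrix_abs_det A h⟩
  -- equality case
  intro hdet1
  have hn1 : ∏ i, n i = 1 := le_antisymm (hprodn.trans hprodt) (hdet1 ▸ hhad)
  have ht1 : ∏ i, t i = 1 := le_antisymm hprodt (hn1 ▸ hprodn)
  have htpos : ∀ i, 0 < t i := by
    intro i
    rcases (htnn i).eq_or_lt with h | h
    · exfalso
      have : ∏ j, t j = 0 := Finset.prod_eq_zero (Finset.mem_univ i) h.symm
      rw [ht1] at this; norm_num at this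
    · exact h
  have hteq : ∀ i, t i = 1 := by
    by_contra hcon
    push_neg at hcon
    obtain ⟨i₀, hi₀⟩ := hcon
    have hstrict : ∏ i, t i < ∏ i, Real.exp (t i - 1) := by
      refine Finset.prod_lt_prod (fun i _ => htpos i)
        (fun i _ => by have := Real.add_one_le_exp (t i - 1); linarith) ?_
      refine ⟨i₀, Finset.mem_univ i₀, ?_⟩
      have := Real.add_one_lt_exp (x := t i₀ - 1) (by intro h; apply hi₀; linarith)
      linarith
    rw [hexp, ht1] at hstrict
    norm_num at hstrict
  have hneq : ∀ i, n i = 1 := by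
    intro i
    rcases lt_or_eq_of_le ((hnt i).trans_eq (hteq i)) with h | h
    · exfalso
      have h1 : ∏ j, n j = n i * ∏ j ∈ Finset.univ.erase i, n j :=
        (Finset.mul_prod_erase _ _ (Finset.mem_univ i)).symm
      have h2 : ∏ j ∈ Finset.univ.erase i, n j ≤ 1 :=
        Finset.prod_le_one (fun j _ => hnnn j) (fun j _ => (hnt j).trans_eq (hteq j))
      have : ∏ j, n j < 1 := by
        rw [h1]
        calc n i * ∏ j ∈ Finset.univ.erase i, n j ≤ n i * 1 :=
              mul_le_mul_of_nonneg_left h2 (hnnn i)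
          _ = n i := mul_one _
          _ < 1 := h
      rw [hn1] at this; norm_num at this
    · exact h
  -- each row lives on the frontier; apply hbd
  have hrow : ∀ i, ∃ j : Fin k, A i = fun j' => if j' = j then (1:ℝ) else 0 := by
    intro i
    have hfr : A i ∈ frontier (secondOrderConeDual k) :=
      mem_frontier_soc hk2 (A i) (hteq i) (hneq i)
    have hmem : A i ∈ dualCone (matCone Pi0) ∩ frontier (secondOrderConeDual k) :=
      ⟨hdual i, hfr⟩
    rw [hbd] at hmem
    obtain ⟨j, lam, hlam, heq⟩ := hmem
    have hlam1 : lam = 1 := by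
      have := hteq i
      rw [htdef] at this
      simp only [heq, Pi.smul_apply, smul_eq_mul] at this
      rw [← Finset.mul_sum] at this
      simpa [Finset.sum_ite_eq'] using this
    exact ⟨j, by rw [heq, hlam1, one_smul]⟩
  choose φ hφ using hrow
  have hinj : Function.Injective φ := by
    intro i i' h
    by_contra hne
    have : A i = A i' := by rw [hφ i, hφ i', h]
    exact hA.ne_zero (Matrix.det_zero_of_row_eq hne this)
  refine ⟨Equiv.ofBijective φ (Finite.injective_iff_bijective.mp hinj), fun i j => ?_⟩
  have := congrFun (hφ i) j
  rw [this]
  simp only [Equiv.ofBijective_apply]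
  exact if_congr eq_comm rfl rfl
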